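/- (Cauchy–Schwarz inequality for vector-lattice-valued bilinear maps.) Let V be a real vector space, let F be a geometric mean closed Archimedean vector lattice, and let T : V × V → F be a bilinear, symmetric, positive semidefinite map. Then for all u, v ∈ V, |T(u,v)| ≤ T(u,u) ⊠ T(v,v), where |f| = f ∨ (−f). -/

import Mathlib

/-- **Theorem 3.1(3) (real case), Cauchy–Schwarz inequality.** `|T(u,v)| ≤ T(u,u) ⊠ T(v,v)`,
where `T(u,u) ⊠ T(v,v) = 2⁻¹ • m₁` and `m₁` is the infimum of
`{θ • T(u,u) + θ⁻¹ • T(v,v) : θ > 0}`. -/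
theorem stmt3 {V : Type*} [AddCommGroup V] [Module ℝ V]
    {F : Type*} [AddCommGroup F] [Lattice F]
    [CovariantClass F F (· + ·) (· ≤ ·)]
    [Module ℝ F] [PosSMulMono ℝ F]
    (harch : ∀ f g : F, (∀ n : ℕ, (n : ℝ) • f ≤ g) → f ≤ 0)
    (hgm : ∀ f g : F, 0 ≤ f → 0 ≤ g →
      ∃ m, IsGLB {x | ∃ θ : ℝ, 0 < θ ∧ x = θ • f + θ⁻¹ • g} m)
    (T : V →ₗ[ℝ] V →ₗ[ℝ] F)
    (hsymm : ∀ u v : V, T u v = T v u)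
    (hpos : ∀ v : V, 0 ≤ T v v)
    (u v : V) (m₁ : F)
    (hm₁ : IsGLB {x | ∃ θ : ℝ, 0 < θ ∧ x = θ • T u u + θ⁻¹ • T v v} m₁) :
    |T u v| ≤ (2⁻¹ : ℝ) • m₁ := by
  have key : ∀ θ : ℝ, 0 < θ → ∀ ε : ℝ, ε = 1 ∨ ε = -1 →
      (2 * ε) • T u v ≤ θ • T u u + θ⁻¹ • T v v := by
    intro θ hθ ε hε
    set a : ℝ := Real.sqrt θ with ha_def
    have ha : 0 < a := Real.sqrt_pos.mpr hθ
    set b : ℝ := -ε * a⁻¹ with hb_def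
    have haa : a * a = θ := Real.mul_self_sqrt hθ.le
    have heps : ε * ε = 1 := by rcases hε with h | h <;> rw [h] <;> norm_num
    have hbb : b * b = θ⁻¹ := by
      rw [hb_def]
      field_simp
      rw [sq, sq, heps, one_mul, haa]
    have hab : a * b = -ε := by
      rw [hb_def]
      field_simp
    have hba : b * a = -ε := by rw [mul_comm]; exact hab
    have hexp : T (a • u + b • v) (a • u + b • v)
        = (θ • T u u + θ⁻¹ • T v v) - (2 * ε) • T u v := by
      simp only [map_add, map_smul, LinearMap.add_apply, LinearMap.smul_apply, smul_add,
        smul_smul, hsymm v u]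
      rw [haa, hab, hba, hbb]
      module
    have h0 := hpos (a • u + b • v)
    rw [hexp] at h0
    exact sub_nonneg.mp h0
  have habs : ∀ x ∈ {x | ∃ θ : ℝ, 0 < θ ∧ x = θ • T u u + θ⁻¹ • T v v},
      (2 : ℝ) • |T u v| ≤ x := by
    rintro x ⟨θ, hθ, rfl⟩
    have h1 : (2 : ℝ) • T u v ≤ θ • T u u + θ⁻¹ • T v v := by
      have := key θ hθ 1 (Or.inl rfl); simpa using this
    have h2 : (2 : ℝ) • (-T u v) ≤ θ • T u u + θ⁻¹ • T v v := by
      have := key θ hθ (-1) (Or.inr rfl)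
      simpa [smul_neg] using this
    have hx1 : T u v ≤ (2⁻¹ : ℝ) • (θ • T u u + θ⁻¹ • T v v) := by
      have := smul_le_smul_of_nonneg_left h1 (by norm_num : (0:ℝ) ≤ 2⁻¹)
      rwa [smul_smul, show (2⁻¹ : ℝ) * 2 = 1 by norm_num, one_smul] at this
    have hx2 : -T u v ≤ (2⁻¹ : ℝ) • (θ • T u u + θ⁻¹ • T v v) := by
      have := smul_le_smul_of_nonneg_left h2 (by norm_num : (0:ℝ) ≤ 2⁻¹)
      rwa [smul_smul, show (2⁻¹ : ℝ) * 2 = 1 by norm_num, one_smul] at this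
    have habs' : |T u v| ≤ (2⁻¹ : ℝ) • (θ • T u u + θ⁻¹ • T v v) :=
      abs_le'.mpr ⟨hx1, hx2⟩
    have := smul_le_smul_of_nonneg_left habs' (by norm_num : (0:ℝ) ≤ 2)
    rwa [smul_smul, show (2 : ℝ) * 2⁻¹ = 1 by norm_num, one_smul] at this
  have hlb : (2 : ℝ) • |T u v| ≤ m₁ := hm₁.2 habs
  have := smul_le_smul_of_nonneg_left hlb (by norm_num : (0:ℝ) ≤ 2⁻¹)
  rwa [smul_smul, show (2⁻¹ : ℝ) * 2 = 1 by norm_num, one_smul] at this
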